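/- Let p ∈ [0,1] and, conditionally on a random variable ḡ*, let N ~ Binomial(n, p(ḡ*)) where p(ḡ*) ∈ [0,1] is measurable. With h as in the paper (h(z,n;α) = z/n + 1/√(2αn) for z ≠ 0, h(0,n;α) = log(2/α)/n), one has P(p(ḡ*) > h(N, n; α)) ≤ α for 0 < α < 1 and n ≥ 3. -/

import Mathlib

open MeasureTheory ProbabilityTheory

open Finset

lemma choose_key (m j : ℕ) : ((j+1:ℕ):ℝ) * ((m+1).choose (j+1)) = ((m:ℝ)+1) * (m.choose j) := by
  have h1 : (m+1) * m.choose j = (m+1).choose (j+1) * (j+1) := Nat.add_one_mul_choose_eq m j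
  have h2 := congrArg (Nat.cast (R := ℝ)) h1
  push_cast at h2 ⊢
  linarith

lemma binom_sum1 (n : ℕ) (x y : ℝ) :
    ∑ k ∈ range (n+1), (k:ℝ) * (n.choose k) * x^k * y^(n-k)
      = n * x * (x+y)^(n-1) := by
  cases n with
  | zero => simp
  | succ m =>
    rw [Finset.sum_range_succ']
    have step : ∑ j ∈ range (m+1), ((j+1:ℕ):ℝ) * ((m+1).choose (j+1)) * x^(j+1) * y^(m+1-(j+1))
        = ((m:ℝ)+1) * x * ∑ j ∈ range (m+1), x^j * y^(m-j) * (m.choose j) := by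
      rw [Finset.mul_sum]
      refine Finset.sum_congr rfl fun j hj => ?_
      have hmj : m + 1 - (j + 1) = m - j := by omega
      rw [hmj]
      calc ((j+1:ℕ):ℝ) * ((m+1).choose (j+1)) * x^(j+1) * y^(m-j)
          = (((j+1:ℕ):ℝ) * ((m+1).choose (j+1))) * (x^(j+1) * y^(m-j)) := by ring
        _ = (((m:ℝ)+1) * (m.choose j)) * (x^(j+1) * y^(m-j)) := by rw [choose_key]
        _ = ((m:ℝ)+1) * x * (x^j * y^(m-j) * (m.choose j)) := by ring
    rw [step, ← add_pow]
    have h2 : m + 1 - 1 = m := by omega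
    rw [h2]
    push_cast
    ring

lemma binom_sum2 (n : ℕ) (x y : ℝ) :
    ∑ k ∈ range (n+1), (k:ℝ) * ((k:ℝ)-1) * (n.choose k) * x^k * y^(n-k)
      = n * ((n:ℝ)-1) * x^2 * (x+y)^(n-2) := by
  cases n with
  | zero => simp
  | succ m =>
    rw [Finset.sum_range_succ']
    have step : ∑ j ∈ range (m+1),
        ((j+1:ℕ):ℝ) * (((j+1:ℕ):ℝ)-1) * ((m+1).choose (j+1)) * x^(j+1) * y^(m+1-(j+1))
        = ((m:ℝ)+1) * x * ∑ j ∈ range (m+1), (j:ℝ) * (m.choose j) * x^j * y^(m-j) := by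
      rw [Finset.mul_sum]
      refine Finset.sum_congr rfl fun j hj => ?_
      have hmj : m + 1 - (j + 1) = m - j := by omega
      rw [hmj]
      calc ((j+1:ℕ):ℝ) * (((j+1:ℕ):ℝ)-1) * ((m+1).choose (j+1)) * x^(j+1) * y^(m-j)
          = (((j+1:ℕ):ℝ) * ((m+1).choose (j+1))) * ((((j+1:ℕ):ℝ)-1) * (x^(j+1) * y^(m-j))) := by
            ring
        _ = (((m:ℝ)+1) * (m.choose j)) * ((((j+1:ℕ):ℝ)-1) * (x^(j+1) * y^(m-j))) := by
            rw [choose_key]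
        _ = ((m:ℝ)+1) * x * ((j:ℝ) * (m.choose j) * x^j * y^(m-j)) := by push_cast; ring
    rw [step, binom_sum1]
    have h2 : m + 1 - 2 = m - 1 := by omega
    rw [h2]
    push_cast
    ring

lemma binom_var (n : ℕ) (x : ℝ) :
    ∑ k ∈ range (n+1), ((k:ℝ) - n*x)^2 * ((n.choose k) * x^k * (1-x)^(n-k))
      = n * x * (1-x) := by
  have hxy : x + (1-x) = 1 := by ring
  have h0 : ∑ k ∈ range (n+1), ((n.choose k : ℝ) * x^k * (1-x)^(n-k)) = 1 := by
    have := add_pow x (1-x) n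
    rw [hxy, one_pow] at this
    exact (Finset.sum_congr rfl fun k _ => by ring).trans this.symm
  have h1 := binom_sum1 n x (1-x)
  have h2 := binom_sum2 n x (1-x)
  rw [hxy, one_pow] at h1 h2
  have expand : ∀ k ∈ range (n+1),
      ((k:ℝ) - n*x)^2 * ((n.choose k) * x^k * (1-x)^(n-k))
      = (k:ℝ) * ((k:ℝ)-1) * (n.choose k) * x^k * (1-x)^(n-k)
        + (1 - 2*(n:ℝ)*x) * ((k:ℝ) * (n.choose k) * x^k * (1-x)^(n-k))
        + ((n:ℝ)*x)^2 * ((n.choose k : ℝ) * x^k * (1-x)^(n-k)) := fun k _ => by ring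
  rw [Finset.sum_congr rfl expand, Finset.sum_add_distrib, Finset.sum_add_distrib,
    ← Finset.mul_sum, ← Finset.mul_sum, h2, h1, h0]
  ring

lemma binom_cheby (n : ℕ) (x : ℝ) (hx : x ∈ Set.Icc (0:ℝ) 1) (t : ℝ) (ht : 0 < t)
    (S : Finset ℕ) (hS : S ⊆ range (n+1))
    (hfar : ∀ k ∈ S, t ≤ |(k:ℝ) - n*x|) :
    ∑ k ∈ S, ((n.choose k : ℝ) * x^k * (1-x)^(n-k)) ≤ n * x * (1-x) / t^2 := by
  obtain ⟨hx0, hx1⟩ := hx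
  have hfpos : ∀ k, 0 ≤ (n.choose k : ℝ) * x^k * (1-x)^(n-k) := fun k =>
    mul_nonneg (mul_nonneg (by positivity) (pow_nonneg hx0 _)) (pow_nonneg (by linarith) _)
  have step1 : ∑ k ∈ S, ((n.choose k : ℝ) * x^k * (1-x)^(n-k))
      ≤ ∑ k ∈ S, ((k:ℝ) - n*x)^2 / t^2 * ((n.choose k : ℝ) * x^k * (1-x)^(n-k)) := by
    refine Finset.sum_le_sum fun k hk => ?_
    have h1 : t^2 ≤ ((k:ℝ) - n*x)^2 := by
      have := hfar k hk
      calc t^2 ≤ |(k:ℝ) - n*x|^2 := by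
            apply pow_le_pow_left₀ ht.le this 2
        _ = ((k:ℝ) - n*x)^2 := sq_abs _
    have h2 : (1:ℝ) ≤ ((k:ℝ) - n*x)^2 / t^2 := (one_le_div (by positivity)).2 h1
    nlinarith [hfpos k, h2]
  have step2 : ∑ k ∈ S, ((k:ℝ) - n*x)^2 / t^2 * ((n.choose k : ℝ) * x^k * (1-x)^(n-k))
      ≤ ∑ k ∈ range (n+1), ((k:ℝ) - n*x)^2 / t^2 * ((n.choose k : ℝ) * x^k * (1-x)^(n-k)) :=
    Finset.sum_le_sum_of_subset_of_nonneg hS fun k _ _ =>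
      mul_nonneg (by positivity) (hfpos k)
  have step3 : ∑ k ∈ range (n+1), ((k:ℝ) - n*x)^2 / t^2 * ((n.choose k : ℝ) * x^k * (1-x)^(n-k))
      = n * x * (1-x) / t^2 := by
    rw [← binom_var n x, Finset.sum_div]
    exact Finset.sum_congr rfl fun k _ => by ring
  linarith

lemma zero_case (n : ℕ) (hn : 1 ≤ n) (α : ℝ) (hα0 : 0 < α) (q : ℝ) (hq1 : q ≤ 1)
    (hq : Real.log (2/α) / n < q) : (1-q)^n ≤ α/2 := by
  have hnpos : (0:ℝ) < n := by exact_mod_cast hn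
  have h1 : 1 - q ≤ Real.exp (-q) := by
    have := Real.add_one_le_exp (-q); linarith
  have h2 : (0:ℝ) ≤ 1 - q := by linarith
  have h3 : (1-q)^n ≤ (Real.exp (-q))^n := pow_le_pow_left₀ h2 h1 n
  have h4 : (Real.exp (-q))^n = Real.exp (-(q*n)) := by
    rw [← Real.exp_nat_mul]; ring_nf
  have h5 : Real.log (2/α) < q * n := (div_lt_iff₀ hnpos).1 hq
  have h6 : Real.exp (-(q*n)) ≤ Real.exp (-(Real.log (2/α))) :=
    Real.exp_le_exp.2 (by linarith)
  have h7 : Real.exp (-(Real.log (2/α))) = α/2 := by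
    rw [Real.exp_neg, Real.exp_log (by positivity)]
    rw [inv_div]
  linarith [h3, h4 ▸ h3]

lemma q_one_sub_q (q : ℝ) : q * (1-q) ≤ 1/4 := by nlinarith [sq_nonneg (q - 1/2)]

lemma tail_bound (n : ℕ) (hn : 3 ≤ n) (α : ℝ) (hα0 : 0 < α) (hα1 : α < 1)
    (q : ℝ) (hq : q ∈ Set.Icc (0:ℝ) 1) :
    ∑ k ∈ (range (n+1)).filter
      (fun k : ℕ => (if k = 0 then Real.log (2/α)/(n:ℝ) else (k:ℝ)/n + 1/Real.sqrt (2*α*n)) < q),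
      ((n.choose k : ℝ) * q^k * (1-q)^(n-k)) ≤ α := by
  obtain ⟨hq0, hq1⟩ := hq
  have hn1 : 1 ≤ n := by omega
  have hnpos : (0:ℝ) < n := by exact_mod_cast hn1
  set S := (range (n+1)).filter
      (fun k : ℕ => (if k = 0 then Real.log (2/α)/(n:ℝ) else (k:ℝ)/n + 1/Real.sqrt (2*α*n)) < q)
    with hSdef
  rw [← Finset.sum_filter_add_sum_filter_not S (fun k => k = 0)]
  have hsqrtpos : 0 < Real.sqrt (2*α*n) := Real.sqrt_pos.2 (by positivity)
  have hzero : ∑ k ∈ S.filter (fun k => k = 0),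
      ((n.choose k : ℝ) * q^k * (1-q)^(n-k)) ≤ α/2 := by
    rw [Finset.filter_eq' S 0]
    by_cases h0 : 0 ∈ S
    · rw [if_pos h0, Finset.sum_singleton]
      have hcond : Real.log (2/α)/(n:ℝ) < q := by
        have := (Finset.mem_filter.1 h0).2
        simpa using this
      have := zero_case n hn1 α hα0 q hq1 hcond
      simpa using this
    · rw [if_neg h0, Finset.sum_empty]; linarith
  have hpos : ∑ k ∈ S.filter (fun k => ¬ k = 0),
      ((n.choose k : ℝ) * q^k * (1-q)^(n-k)) ≤ α/2 := by
    set t : ℝ := (n:ℝ) / Real.sqrt (2*α*n) with htdef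
    have ht : 0 < t := by positivity
    have hsub : S.filter (fun k => ¬ k = 0) ⊆ range (n+1) :=
      (Finset.filter_subset _ S).trans (Finset.filter_subset _ _)
    have hfar : ∀ k ∈ S.filter (fun k => ¬ k = 0), t ≤ |(k:ℝ) - n*q| := by
      intro k hk
      rw [Finset.mem_filter] at hk
      obtain ⟨hkS, hk0⟩ := hk
      have hcond : (k:ℝ)/n + 1/Real.sqrt (2*α*n) < q := by
        have := (Finset.mem_filter.1 hkS).2
        rw [if_neg hk0] at this
        exact this
      have h1 : (k:ℝ) + t < n * q := by
        have := mul_lt_mul_of_pos_right hcond hnpos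
        have he : ((k:ℝ)/n + 1/Real.sqrt (2*α*n)) * n = (k:ℝ) + t := by
          rw [add_mul, div_mul_cancel₀ _ hnpos.ne', one_div, inv_mul_eq_div]
        rw [he] at this
        linarith
      have h2 : t ≤ n*q - (k:ℝ) := by linarith
      calc t ≤ n*q - (k:ℝ) := h2
        _ ≤ |n*q - (k:ℝ)| := le_abs_self _
        _ = |(k:ℝ) - n*q| := abs_sub_comm _ _
    have hcheb := binom_cheby n q ⟨hq0, hq1⟩ t ht _ hsub hfar
    have ht2 : t^2 = (n:ℝ)/(2*α) := by
      rw [htdef, div_pow, Real.sq_sqrt (by positivity)]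
      field_simp
    have heq : (n:ℝ) * q * (1-q) / t^2 = 2*α*(q*(1-q)) := by
      rw [ht2]
      field_simp
    rw [heq] at hcheb
    have := q_one_sub_q q
    nlinarith
  linarith

/-- Conditionally on `ḡ*` (with distribution `ν` on `ℝ`), let `N` be
`Binomial(n, p(ḡ*))` (the kernel `κ` gives its conditional law). With
`h(z,n;α) = z/n + 1/√(2αn)` for `z ≠ 0` and `h(0,n;α) = log(2/α)/n`, one has
`P(p(ḡ*) > h(N,n;α)) ≤ α`. -/
theorem conditional_binomial_estimate
    (n : ℕ) (hn : 3 ≤ n) (α : ℝ) (hα0 : 0 < α) (hα1 : α < 1)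
    (p : ℝ → ℝ) (hp : Measurable p) (hp01 : ∀ g, p g ∈ Set.Icc (0 : ℝ) 1)
    (ν : Measure ℝ) [IsProbabilityMeasure ν]
    (κ : ProbabilityTheory.Kernel ℝ ℕ) [ProbabilityTheory.IsMarkovKernel κ]
    (hκ : ∀ᵐ g ∂ν, ∀ k : ℕ,
      κ g {k} = ENNReal.ofReal ((n.choose k : ℝ) * p g ^ k * (1 - p g) ^ (n - k)))
    (h : ℕ → ℕ → ℝ → ℝ)
    (hh : ∀ (z : ℕ) (α' : ℝ), h z n α' =
      if z = 0 then Real.log (2 / α') / n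
      else z / n + 1 / Real.sqrt (2 * α' * n)) :
    (ν.compProd κ) {q | p q.1 > h q.2 n α} ≤ ENNReal.ofReal α := by
  have hmeas_s : MeasurableSet {q : ℝ × ℕ | p q.1 > h q.2 n α} := by
    have h1 : Measurable fun q : ℝ × ℕ => h q.2 n α :=
      (measurable_of_countable (fun k : ℕ => h k n α)).comp measurable_snd
    exact measurableSet_lt h1 (hp.comp measurable_fst)
  rw [Measure.compProd_apply hmeas_s]
  have key : ∀ᵐ g ∂ν,
      κ g (Prod.mk g ⁻¹' {q : ℝ × ℕ | p q.1 > h q.2 n α}) ≤ ENNReal.ofReal α := by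
    filter_upwards [hκ] with g hg
    set q := p g with hqdef
    obtain ⟨hq0, hq1⟩ := hp01 g
    have hA : Prod.mk g ⁻¹' {q : ℝ × ℕ | p q.1 > h q.2 n α} = {k : ℕ | h k n α < q} := rfl
    rw [hA]
    set S : Finset ℕ := (range (n+1)).filter
      (fun k : ℕ => (if k = 0 then Real.log (2/α)/(n:ℝ) else (k:ℝ)/n + 1/Real.sqrt (2*α*n)) < q)
      with hSdef
    have hsplit : {k : ℕ | h k n α < q} ⊆ (↑S : Set ℕ) ∪ {k : ℕ | n < k} := by
      intro k hk
      by_cases hkn : k ≤ n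
      · left
        simp only [hSdef, Finset.coe_filter, Set.mem_setOf_eq, Finset.mem_range]
        refine ⟨by omega, ?_⟩
        have := hk
        rw [Set.mem_setOf_eq, hh k α] at this
        exact this
      · right; simp only [Set.mem_setOf_eq]; omega
    have htail : κ g {k : ℕ | n < k} = 0 := by
      have : ({k : ℕ | n < k} : Set ℕ) = id ⁻¹' {k : ℕ | n < k} := rfl
      rw [this, measure_preimage_eq_zero_iff_of_countable (Set.to_countable _)]
      intro k hk
      simp only [Set.mem_setOf_eq] at hk
      have : id ⁻¹' ({k} : Set ℕ) = {k} := rfl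
      rw [this, hg k, Nat.choose_eq_zero_of_lt hk]
      simp
    have hSsum : κ g (↑S : Set ℕ) ≤ ENNReal.ofReal α := by
      have h1 : κ g (↑S : Set ℕ) = ∑ k ∈ S, κ g {k} :=
        (sum_measure_preimage_singleton (f := id) S
          (fun k _ => measurableSet_singleton k)).symm
      rw [h1]
      have h2 : ∑ k ∈ S, κ g {k}
          = ENNReal.ofReal (∑ k ∈ S, ((n.choose k : ℝ) * q^k * (1-q)^(n-k))) := by
        rw [ENNReal.ofReal_sum_of_nonneg]
        · exact Finset.sum_congr rfl fun k _ => hg k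
        · intro k _
          exact mul_nonneg (mul_nonneg (by positivity) (pow_nonneg hq0 _))
            (pow_nonneg (by linarith) _)
      rw [h2]
      exact ENNReal.ofReal_le_ofReal (tail_bound n hn α hα0 hα1 q ⟨hq0, hq1⟩)
    calc κ g {k : ℕ | h k n α < q} ≤ κ g ((↑S : Set ℕ) ∪ {k : ℕ | n < k}) :=
          measure_mono hsplit
      _ ≤ κ g (↑S : Set ℕ) + κ g {k : ℕ | n < k} := measure_union_le _ _
      _ ≤ ENNReal.ofReal α + 0 := by rw [htail]; exact add_le_add hSsum le_rfl
      _ = ENNReal.ofReal α := by rw [add_zero]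
  calc ∫⁻ g, κ g (Prod.mk g ⁻¹' {q : ℝ × ℕ | p q.1 > h q.2 n α}) ∂ν
      ≤ ∫⁻ _, ENNReal.ofReal α ∂ν := lintegral_mono_ae key
    _ = ENNReal.ofReal α := by simp [lintegral_const]
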